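/- arXiv:1108.5931 — 2 statements merged into one kernel-verified Lean document; each statement's English description precedes it below -/
import Mathlib

section
/- Let C be an n×n Hermitian complex matrix, let Π_C = 𝟙_{(−∞,0)}(C) be the spectral projection of C onto the span of its eigenvectors with negative eigenvalues, and let |C| = √(C²) = √(C*C). Then for every n×n orthogonal projection matrix Π (i.e. Π = Π* = Π²) one has Tr( C(Π − Π_C) ) = Tr( |C| (Π − Π_C)² ). -/
open Matrix

noncomputable section

variable {n : ℕ}

/-- The spectral projection `𝟙_{(-∞,0)}(C)` of a Hermitian matrix `C` onto the span of its
eigenvectors with negative eigenvalues, i.e. `∑_{i : λ_i < 0} |v_i⟩⟨v_i|`. -/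
def negProj {C : Matrix (Fin n) (Fin n) ℂ} (hC : C.IsHermitian) : Matrix (Fin n) (Fin n) ℂ :=
  (hC.eigenvectorUnitary : Matrix (Fin n) (Fin n) ℂ) *
    Matrix.diagonal (fun i => if hC.eigenvalues i < 0 then (1 : ℂ) else 0) *
    star (hC.eigenvectorUnitary : Matrix (Fin n) (Fin n) ℂ)

/-- The absolute value `|C| = √(C*C) = ∑_i |λ_i| |v_i⟩⟨v_i|` of a Hermitian matrix `C`. -/
def absMat {C : Matrix (Fin n) (Fin n) ℂ} (hC : C.IsHermitian) : Matrix (Fin n) (Fin n) ℂ :=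
  (hC.eigenvectorUnitary : Matrix (Fin n) (Fin n) ℂ) *
    Matrix.diagonal (fun i => ((|hC.eigenvalues i| : ℝ) : ℂ)) *
    star (hC.eigenvectorUnitary : Matrix (Fin n) (Fin n) ℂ)

/-- for a Hermitian matrix `C` and any orthogonal projection matrix `Π`,
`Tr(C(Π - Π_C)) = Tr(|C| (Π - Π_C)²)` where `Π_C = 𝟙_{(-∞,0)}(C)`. -/
theorem trace_identity_proj (C : Matrix (Fin n) (Fin n) ℂ) (hC : C.IsHermitian)
    (P : Matrix (Fin n) (Fin n) ℂ) (hP_sa : Pᴴ = P) (hP_idem : P * P = P) :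
    (C * (P - negProj hC)).trace
      = (absMat hC * ((P - negProj hC) * (P - negProj hC))).trace := by
  set U : Matrix (Fin n) (Fin n) ℂ := (hC.eigenvectorUnitary : Matrix (Fin n) (Fin n) ℂ) with hU
  have hU1 : U * star U = 1 := (Matrix.mem_unitaryGroup_iff).mp hC.eigenvectorUnitary.2
  have hU2 : star U * U = 1 := (Matrix.mem_unitaryGroup_iff').mp hC.eigenvectorUnitary.2
  set D : Matrix (Fin n) (Fin n) ℂ :=
    Matrix.diagonal (fun i => ((hC.eigenvalues i : ℝ) : ℂ)) with hD
  set N : Matrix (Fin n) (Fin n) ℂ :=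
    Matrix.diagonal (fun i => if hC.eigenvalues i < 0 then (1 : ℂ) else 0) with hN
  set A : Matrix (Fin n) (Fin n) ℂ :=
    Matrix.diagonal (fun i => ((|hC.eigenvalues i| : ℝ) : ℂ)) with hA
  set Q : Matrix (Fin n) (Fin n) ℂ := star U * P * U with hQ
  have hPQ : P = U * Q * star U := by
    rw [hQ]
    calc P = (U * star U) * P * (U * star U) := by rw [hU1]; simp
    _ = U * (star U * P * U) * star U := by noncomm_ring
  have hQidem : Q * Q = Q := by
    rw [hQ]
    calc (star U * P * U) * (star U * P * U)
        = star U * (P * (U * star U) * P) * U := by noncomm_ring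
    _ = star U * P * U := by rw [hU1]; simp [hP_idem, Matrix.mul_assoc]
  have hC' : C = U * D * star U := hC.spectral_theorem
  have hNidem : N * N = N := by
    rw [hN, Matrix.diagonal_mul_diagonal]
    refine congrArg Matrix.diagonal (funext fun i => ?_)
    split <;> simp
  have hAN : A * N = -(D * N) := by
    rw [hA, hN, hD, Matrix.diagonal_mul_diagonal, Matrix.diagonal_mul_diagonal,
      Matrix.diagonal_neg]
    refine congrArg Matrix.diagonal (funext fun i => ?_)
    by_cases h : hC.eigenvalues i < 0
    · simp only [h, if_pos, mul_one]
      rw [abs_of_neg h]; push_cast; ring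
    · simp [h]
  have hNA : N * A = A * N := by
    rw [hA, hN, Matrix.diagonal_mul_diagonal, Matrix.diagonal_mul_diagonal]
    refine congrArg Matrix.diagonal (funext fun i => ?_)
    ring
  have hAD : A - (2 : ℂ) • (A * N) = D := by
    rw [hA, hN, hD, Matrix.diagonal_mul_diagonal, ← Matrix.diagonal_smul, Matrix.diagonal_sub]
    refine congrArg Matrix.diagonal (funext fun i => ?_)
    simp only [Pi.smul_apply, smul_eq_mul]
    by_cases h : hC.eigenvalues i < 0
    · simp only [h, if_pos, mul_one]
      rw [abs_of_neg h]; push_cast; ring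
    · simp only [h, if_neg, not_false_iff, mul_zero, sub_zero]
      rw [abs_of_nonneg (not_lt.mp h)]
  -- rewrite everything in terms of U, D, N, A, Q
  have hNeg : negProj hC = U * N * star U := rfl
  have hAbs : absMat hC = U * A * star U := rfl
  have hdiff : P - negProj hC = U * (Q - N) * star U := by
    rw [hNeg, hPQ]; noncomm_ring
  have hLHS : (C * (P - negProj hC)).trace = (D * (Q - N)).trace := by
    have e : C * (P - negProj hC) = U * (D * (Q - N)) * star U := by
      rw [hdiff, hC']
      calc U * D * star U * (U * (Q - N) * star U)
          = U * (D * ((star U * U) * (Q - N))) * star U := by noncomm_ring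
      _ = U * (D * (Q - N)) * star U := by rw [hU2]; simp
    rw [e, Matrix.trace_mul_cycle, ← Matrix.mul_assoc, hU2, Matrix.one_mul]
  have hRHS : (absMat hC * ((P - negProj hC) * (P - negProj hC))).trace
      = (A * ((Q - N) * (Q - N))).trace := by
    rw [hAbs, hdiff]
    have h2 : (U * (Q - N) * star U) * (U * (Q - N) * star U)
        = U * ((Q - N) * (Q - N)) * star U := by
      calc (U * (Q - N) * star U) * (U * (Q - N) * star U)
          = U * ((Q - N) * ((star U * U) * (Q - N))) * star U := by noncomm_ring
      _ = _ := by rw [hU2]; simp [Matrix.mul_assoc]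
    rw [h2]
    have : U * A * star U * (U * ((Q - N) * (Q - N)) * star U)
        = U * (A * ((Q - N) * (Q - N))) * star U := by
      calc U * A * star U * (U * ((Q - N) * (Q - N)) * star U)
          = U * (A * ((star U * U) * ((Q - N) * (Q - N)))) * star U := by noncomm_ring
      _ = _ := by rw [hU2]; simp [Matrix.mul_assoc]
    rw [this, Matrix.trace_mul_cycle, ← Matrix.mul_assoc, hU2, Matrix.one_mul]
  rw [hLHS, hRHS]
  -- now a purely diagonal/idempotent computation
  have hexp : (Q - N) * (Q - N) = Q - Q * N - N * Q + N := by
    have : (Q - N) * (Q - N) = Q * Q - Q * N - N * Q + N * N := by noncomm_ring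
    rw [this, hQidem, hNidem]
  rw [hexp]
  have : A * (Q - Q * N - N * Q + N) = A * Q - A * (Q * N) - (A * N) * Q + A * N := by
    noncomm_ring
  rw [this]
  rw [Matrix.trace_add, Matrix.trace_sub, Matrix.trace_sub]
  have hcyc : (A * (Q * N)).trace = ((A * N) * Q).trace := by
    rw [← Matrix.mul_assoc, Matrix.trace_mul_cycle, hNA]
  rw [hcyc]
  have hD' : (D * (Q - N)).trace = (D * Q).trace - (D * N).trace := by
    rw [Matrix.mul_sub, Matrix.trace_sub]
  rw [hD']
  have h1 : (A * Q).trace - ((A * N) * Q).trace - ((A * N) * Q).trace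
      = ((A - (2:ℂ) • (A * N)) * Q).trace := by
    rw [Matrix.sub_mul, Matrix.smul_mul, Matrix.trace_sub, Matrix.trace_smul]
    simp only [smul_eq_mul]
    ring
  have h2 : (A * N).trace = -((D * N).trace) := by rw [hAN, Matrix.trace_neg]
  have h3 : (A * Q).trace - ((A * N) * Q).trace - ((A * N) * Q).trace = (D * Q).trace := by
    rw [h1, hAD]
  linear_combination -h3 - h2
end
end

section
/- Let C be an invertible n×n Hermitian complex matrix and let Π_C = 𝟙_{(−∞,0)}(C) be the spectral projection of C onto the span of its eigenvectors with negative eigenvalues. Then for every n×n orthogonal projection matrix Π (i.e. Π = Π* = Π²) one has Tr(CΠ) ≥ Tr(CΠ_C), with equality if and only if Π = Π_C. -/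
open Matrix

noncomputable section

variable {n : ℕ}

/-- Diagonal entries of a Hermitian idempotent are sums of squared norms of column entries. -/
lemma diag_proj_eq {m : ℕ} (R : Matrix (Fin m) (Fin m) ℂ) (hsa : Rᴴ = R) (hid : R * R = R)
    (i : Fin m) : R i i = ((∑ k, Complex.normSq (R k i) : ℝ) : ℂ) := by
  have h : R i i = (Rᴴ * R) i i := by rw [hsa, hid]
  rw [h]
  simp only [Matrix.mul_apply, Matrix.conjTranspose_apply]
  push_cast
  refine Finset.sum_congr rfl fun k _ => ?_
  rw [Complex.normSq_eq_conj_mul_self]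
  rfl

/-- If a Hermitian idempotent has a zero diagonal entry, its whole column vanishes. -/
lemma col_eq_zero_of_diag {m : ℕ} (R : Matrix (Fin m) (Fin m) ℂ) (hsa : Rᴴ = R)
    (hid : R * R = R) (i : Fin m) (h : R i i = 0) (k : Fin m) : R k i = 0 := by
  have h1 := diag_proj_eq R hsa hid i
  rw [h] at h1
  have h2 : (∑ j, Complex.normSq (R j i) : ℝ) = 0 := by exact_mod_cast h1.symm
  have h3 := (Finset.sum_eq_zero_iff_of_nonneg
    (fun j _ => Complex.normSq_nonneg (R j i))).mp h2 k (Finset.mem_univ k)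
  exact Complex.normSq_eq_zero.mp h3

/-- for an invertible Hermitian matrix `C` and any orthogonal projection
matrix `Π`, `Tr(CΠ) ≥ Tr(CΠ_C)` (the traces being real), with equality if and only if
`Π = Π_C`, where `Π_C = 𝟙_{(-∞,0)}(C)`. -/
theorem trace_min_over_projections (C : Matrix (Fin n) (Fin n) ℂ) (hC : C.IsHermitian)
    (hinv : IsUnit C)
    (P : Matrix (Fin n) (Fin n) ℂ) (hP_sa : Pᴴ = P) (hP_idem : P * P = P) :
    (C * negProj hC).trace.re ≤ (C * P).trace.re ∧
      ((C * P).trace = (C * negProj hC).trace ↔ P = negProj hC) := by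
  set U : Matrix (Fin n) (Fin n) ℂ := (hC.eigenvectorUnitary : Matrix (Fin n) (Fin n) ℂ) with hU
  have hU1 : U * star U = 1 := Matrix.mem_unitaryGroup_iff.mp hC.eigenvectorUnitary.2
  have hU2 : star U * U = 1 := Matrix.mem_unitaryGroup_iff'.mp hC.eigenvectorUnitary.2
  set lam : Fin n → ℝ := hC.eigenvalues with hlam
  set e : Fin n → ℝ := fun i => if lam i < 0 then 1 else 0 with he
  set D : Matrix (Fin n) (Fin n) ℂ := Matrix.diagonal (RCLike.ofReal ∘ hC.eigenvalues) with hD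
  set E : Matrix (Fin n) (Fin n) ℂ :=
    Matrix.diagonal (fun i => if hC.eigenvalues i < 0 then (1 : ℂ) else 0) with hE
  set Q : Matrix (Fin n) (Fin n) ℂ := star U * P * U with hQ
  have hspec : C = U * D * star U := hC.spectral_theorem
  have hNP : negProj hC = U * E * star U := rfl
  -- Q is a Hermitian idempotent
  have hQ_sa : Qᴴ = Q := by
    simp [hQ, Matrix.conjTranspose_mul, Matrix.mul_assoc, hP_sa, Matrix.star_eq_conjTranspose]
  have hQ_idem : Q * Q = Q := by
    calc Q * Q = star U * P * (U * star U) * P * U := by simp [hQ, Matrix.mul_assoc]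
      _ = star U * (P * P) * U := by rw [hU1]; simp [Matrix.mul_assoc]
      _ = Q := by rw [hP_idem]
  -- R = 1 - Q is a Hermitian idempotent
  set R : Matrix (Fin n) (Fin n) ℂ := 1 - Q with hR
  have hR_sa : Rᴴ = R := by
    simp [hR, Matrix.conjTranspose_sub, hQ_sa]
  have hR_idem : R * R = R := by
    simp only [hR, Matrix.sub_mul, Matrix.mul_sub, Matrix.one_mul, Matrix.mul_one, hQ_idem]
    abel
  -- diagonal entries of Q
  set q : Fin n → ℝ := fun i => ∑ k, Complex.normSq (Q k i) with hq
  have hQdiag : ∀ i, Q i i = ((q i : ℝ) : ℂ) := fun i => diag_proj_eq Q hQ_sa hQ_idem i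
  set r : Fin n → ℝ := fun i => ∑ k, Complex.normSq (R k i) with hr
  have hRdiag : ∀ i, R i i = ((r i : ℝ) : ℂ) := fun i => diag_proj_eq R hR_sa hR_idem i
  have hq_nonneg : ∀ i, 0 ≤ q i := fun i =>
    Finset.sum_nonneg fun k _ => Complex.normSq_nonneg _
  have hr_nonneg : ∀ i, 0 ≤ r i := fun i =>
    Finset.sum_nonneg fun k _ => Complex.normSq_nonneg _
  have hqr : ∀ i, q i + r i = 1 := by
    intro i
    have : ((q i : ℝ) : ℂ) + ((r i : ℝ) : ℂ) = 1 := by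
      rw [← hQdiag, ← hRdiag]
      simp [hR, Matrix.sub_apply, Matrix.one_apply]
    exact_mod_cast this
  have hq_le_one : ∀ i, q i ≤ 1 := by
    intro i
    have := hqr i
    nlinarith [hr_nonneg i]
  -- eigenvalues are nonzero
  have hlam_ne : ∀ i, lam i ≠ 0 := by
    intro i hzero
    have hdet : C.det ≠ 0 := ((Matrix.isUnit_iff_isUnit_det C).mp hinv).ne_zero
    rw [hC.det_eq_prod_eigenvalues] at hdet
    have := Finset.prod_ne_zero_iff.mp hdet i (Finset.mem_univ i)
    exact this (by rw [← hlam, hzero]; norm_num)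
  -- trace identities
  have h1 : (C * P).trace = (D * Q).trace := by
    rw [hspec, hQ, Matrix.mul_assoc (U * D) (star U) P, Matrix.trace_mul_comm,
      ← Matrix.mul_assoc (star U * P) U D, Matrix.trace_mul_comm]
  have h2 : (C * negProj hC).trace = (D * E).trace := by
    rw [hNP, hspec]
    rw [show U * D * star U * (U * E * star U) = U * D * (star U * U) * E * star U by
      simp [Matrix.mul_assoc]]
    rw [hU2, Matrix.mul_one, Matrix.mul_assoc (U * D) E (star U), Matrix.trace_mul_comm,
      show E * star U * (U * D) = E * (star U * U) * D by simp [Matrix.mul_assoc],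
      hU2, Matrix.mul_one, Matrix.trace_mul_comm]
  have hcast : ∀ x : ℝ, (RCLike.ofReal x : ℂ) = (x : ℂ) := fun x => rfl
  have h3 : (D * Q).trace = ((∑ i, lam i * q i : ℝ) : ℂ) := by
    rw [Matrix.trace]
    push_cast
    refine Finset.sum_congr rfl fun i _ => ?_
    rw [Matrix.diag, hD, Matrix.diagonal_mul, Function.comp_apply, hcast, hQdiag i]
  have h4 : (D * E).trace = ((∑ i, lam i * e i : ℝ) : ℂ) := by
    rw [Matrix.trace]
    push_cast
    refine Finset.sum_congr rfl fun i _ => ?_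
    rw [Matrix.diag, hD, hE, Matrix.diagonal_mul, Function.comp_apply, hcast,
      Matrix.diagonal_apply_eq]
    simp only [he, ← hlam]
    by_cases h : lam i < 0
    · simp [h]
    · simp [h]
  -- the termwise inequality
  have hterm : ∀ i ∈ Finset.univ, lam i * e i ≤ lam i * q i := by
    intro i _
    by_cases h : lam i < 0
    · have : e i = 1 := by simp [he, h]
      rw [this, mul_one]
      nlinarith [hq_le_one i]
    · have : e i = 0 := by simp [he, h]
      rw [this, mul_zero]
      have hge : 0 ≤ lam i := le_of_not_gt h
      exact mul_nonneg hge (hq_nonneg i)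
  have hsumle : (∑ i, lam i * e i) ≤ ∑ i, lam i * q i := Finset.sum_le_sum hterm
  constructor
  · rw [h1, h2, h3, h4]
    simpa using hsumle
  constructor
  · -- equality ⇒ P = negProj
    intro heq
    rw [h1, h3, h2, h4] at heq
    have hsums : (∑ i, lam i * q i) = ∑ i, lam i * e i := by exact_mod_cast heq
    have hzero : (∑ i, (lam i * q i - lam i * e i)) = 0 := by
      rw [Finset.sum_sub_distrib, hsums, sub_self]
    have heach : ∀ i ∈ Finset.univ, lam i * q i - lam i * e i = 0 :=
      (Finset.sum_eq_zero_iff_of_nonneg fun i hi => sub_nonneg.mpr (hterm i hi)).mp hzero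
    have hqe : ∀ i, q i = e i := by
      intro i
      have h0 := heach i (Finset.mem_univ i)
      have : lam i * (q i - e i) = 0 := by ring_nf; linarith [h0]
      rcases mul_eq_zero.mp this with h | h
      · exact absurd h (hlam_ne i)
      · linarith [sub_eq_zero.mp h]
    -- Q = E entrywise
    have hQE : Q = E := by
      ext k j
      by_cases hneg : lam j < 0
      · -- q j = 1, so R's column j vanishes
        have hqj : q j = 1 := by rw [hqe j]; simp [he, hneg]
        have hrj : r j = 0 := by have := hqr j; linarith
        have hRjj : R j j = 0 := by rw [hRdiag j, hrj]; norm_num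
        have hcol := col_eq_zero_of_diag R hR_sa hR_idem j hRjj k
        have hQkj : Q k j = (1 : Matrix (Fin n) (Fin n) ℂ) k j := by
          have : (1 : Matrix (Fin n) (Fin n) ℂ) k j - Q k j = 0 := by
            simpa [hR, Matrix.sub_apply] using hcol
          linear_combination -this
        rw [hQkj, hE]
        by_cases hkj : k = j
        · subst hkj
          simp [Matrix.one_apply, Matrix.diagonal_apply, ← hlam, hneg]
        · simp [Matrix.one_apply, Matrix.diagonal_apply, hkj]
      · have hqj : q j = 0 := by rw [hqe j]; simp [he, hneg]
        have hQjj : Q j j = 0 := by rw [hQdiag j, hqj]; norm_num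
        have hcol := col_eq_zero_of_diag Q hQ_sa hQ_idem j hQjj k
        rw [hcol, hE]
        by_cases hkj : k = j
        · subst hkj
          simp [Matrix.diagonal_apply, ← hlam, hneg]
        · simp [Matrix.diagonal_apply, hkj]
    -- recover P
    have hPU : U * Q * star U = P := by
      calc U * Q * star U = (U * star U) * P * (U * star U) := by
            simp [hQ, Matrix.mul_assoc]
        _ = P := by rw [hU1]; simp
    rw [← hPU, hQE, hNP]
  · intro h
    rw [h]
end
end
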